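/- For any ε > 0 there is a δ = δ(ε) > 0, depending only on ε and q (not on the output alphabet B), such that: if Q : F_q → B is a q-ary input channel with finite output alphabet B, and A₁, A₂, B₁, B₂ are random variables jointly distributed as p(a₁,a₂,b₁,b₂) = q^{-2} Q(b₁ | a₁+a₂) Q(b₂ | a₂) (addition in F_q), and I(A₂; B₁B₂A₁) − I(A₂; B₂) < δ, then I(A₂; B₂) ∉ (ε, 1−ε). -/

import Mathlib

open Finset

namespace PolarMAC

/-- A single-user `q`-ary input channel with finite output alphabet `B`. -/
structure Chan (q : ℕ) where
  B : Type
  [fintypeB : Fintype B]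
  Q : ZMod q → B → ℝ

attribute [instance] Chan.fintypeB

/-- `C` is a genuine channel: entries nonnegative, rows summing to one. -/
def IsChan {q : ℕ} [Fact (Nat.Prime q)] (C : Chan q) : Prop :=
  (∀ x b, 0 ≤ C.Q x b) ∧ ∀ x, ∑ b, C.Q x b = 1


noncomputable def Hq (q : ℕ) {α : Type*} [Fintype α] (p : α → ℝ) : ℝ :=
  ∑ a, -(p a * Real.logb q (p a))

noncomputable def MIq (q : ℕ) {α β : Type*} [Fintype α] [Fintype β] (p : α → β → ℝ) : ℝ :=
  Hq q (fun a => ∑ b, p a b) + Hq q (fun b => ∑ a, p a b) - Hq q (fun ab : α × β => p ab.1 ab.2)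



noncomputable def ent {α : Type*} [Fintype α] (p : α → ℝ) : ℝ :=
  ∑ a, Real.negMulLog (p a)

def IsProb {α : Type*} [Fintype α] (p : α → ℝ) : Prop :=
  (∀ a, 0 ≤ p a) ∧ ∑ a, p a = 1

lemma Hq_eq_ent (q : ℕ) {α : Type*} [Fintype α] (p : α → ℝ) :
    Hq q p = ent p / Real.log q := by
  unfold Hq ent Real.logb
  rw [Finset.sum_div]
  congr 1; funext a
  rw [Real.negMulLog]
  ring

lemma prob_le_one {α : Type*} [Fintype α] {p : α → ℝ} (hp : IsProb p) (a : α) : p a ≤ 1 := by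
  rw [← hp.2]
  exact Finset.single_le_sum (fun i _ => hp.1 i) (mem_univ a)

lemma ent_nonneg {α : Type*} [Fintype α] {p : α → ℝ} (hp : IsProb p) : 0 ≤ ent p :=
  Finset.sum_nonneg fun a _ => Real.negMulLog_nonneg (hp.1 a) (prob_le_one hp a)

lemma ent_le_log_card {α : Type*} [Fintype α] {p : α → ℝ} (hp : IsProb p) :
    ent p ≤ Real.log (Fintype.card α) := by
  classical
  have hcard : 0 < Fintype.card α := by
    rcases Finset.eq_empty_or_nonempty (univ : Finset α) with h | h
    · exfalso; have := hp.2; rw [h] at this; simp at this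
    · exact Fintype.card_pos_iff.mpr ⟨h.choose⟩
  -- show ∑ negMulLog (p a) ≤ log card, i.e. ∑ p a * log (p a * card) ≥ 0
  have key : ∀ a : α, p a - (Fintype.card α : ℝ)⁻¹ ≤ p a * Real.log (p a * Fintype.card α) := by
    intro a
    rcases eq_or_lt_of_le (hp.1 a) with h | h
    · simp [← h]

    · have hx : 0 < p a * Fintype.card α := by positivity
      have := Real.one_sub_inv_le_log_of_pos hx
      calc p a - (Fintype.card α : ℝ)⁻¹ = p a * (1 - (p a * Fintype.card α)⁻¹) := by
            field_simp
          _ ≤ p a * Real.log (p a * Fintype.card α) := by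
            apply mul_le_mul_of_nonneg_left this (le_of_lt h)
  have hsum := Finset.sum_le_sum (fun a (_ : a ∈ univ) => key a)
  have h1 : ∑ a : α, (p a - (Fintype.card α : ℝ)⁻¹) = 0 := by
    rw [Finset.sum_sub_distrib, hp.2, Finset.sum_const, Finset.card_univ, nsmul_eq_mul,
      mul_inv_cancel₀ (by positivity), sub_self]
  rw [h1] at hsum
  have expand : ∀ a : α, p a * Real.log (p a * Fintype.card α)
      = -Real.negMulLog (p a) + p a * Real.log (Fintype.card α) := by
    intro a
    rcases eq_or_lt_of_le (hp.1 a) with h | h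
    · simp [← h, Real.negMulLog]
    · rw [Real.log_mul (ne_of_gt h) (by positivity), Real.negMulLog]
      ring
  rw [Finset.sum_congr rfl (fun a _ => expand a)] at hsum
  have h2 : (0:ℝ) ≤ -ent p + Real.log (Fintype.card α) := by
    simpa [ent, Finset.sum_add_distrib, ← Finset.sum_mul, hp.2] using hsum
  linarith


-- scalar Jensen for negMulLog
lemma nml_jensen {ι : Type*} [Fintype ι] (w x : ι → ℝ) (hw : ∀ i, 0 ≤ w i)
    (hw1 : ∑ i, w i = 1) (hx : ∀ i, 0 ≤ x i) :
    ∑ i, w i * Real.negMulLog (x i) ≤ Real.negMulLog (∑ i, w i * x i) := by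
  have := Real.concaveOn_negMulLog.le_map_sum (t := univ) (w := w) (p := x)
    (fun i _ => hw i) hw1 (fun i _ => hx i)
  simpa [smul_eq_mul] using this

lemma nml_jensen_strict {ι : Type*} [Fintype ι] (w x : ι → ℝ) (hw : ∀ i, 0 ≤ w i)
    (hw1 : ∑ i, w i = 1) (hx : ∀ i, 0 ≤ x i) {j k : ι}
    (hj : 0 < w j) (hk : 0 < w k) (hne : x j ≠ x k) :
    ∑ i, w i * Real.negMulLog (x i) < Real.negMulLog (∑ i, w i * x i) := by
  classical
  set t : Finset ι := univ.filter (fun i => 0 < w i) with ht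
  have hjt : j ∈ t := by simp [ht, hj]
  have hkt : k ∈ t := by simp [ht, hk]
  have hsub : ∀ i ∈ univ, i ∉ t → w i * Real.negMulLog (x i) = 0 := by
    intro i _ hit
    have : w i = 0 := by
      by_contra h
      exact hit (by simp [ht, lt_of_le_of_ne (hw i) (Ne.symm h)])
    simp [this]
  have hsub2 : ∀ i ∈ univ, i ∉ t → w i * x i = 0 := by
    intro i _ hit
    have : w i = 0 := by
      by_contra h
      exact hit (by simp [ht, lt_of_le_of_ne (hw i) (Ne.symm h)])
    simp [this]
  have e1 : ∑ i ∈ t, w i * Real.negMulLog (x i) = ∑ i, w i * Real.negMulLog (x i) :=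
    Finset.sum_subset (subset_univ t) hsub
  have e2 : ∑ i ∈ t, w i * x i = ∑ i, w i * x i :=
    Finset.sum_subset (subset_univ t) hsub2
  have e3 : ∑ i ∈ t, w i = 1 := by
    rw [← hw1]
    exact Finset.sum_subset (subset_univ t) (by
      intro i _ hit
      by_contra h
      exact hit (by simp [ht, lt_of_le_of_ne (hw i) (Ne.symm h)]))
  have := Real.strictConcaveOn_negMulLog.lt_map_sum (t := t) (w := w) (p := x)
    (fun i hi => by simpa [ht] using hi) e3 (fun i _ => hx i)
    ⟨j, hjt, k, hkt, hne⟩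
  simpa [smul_eq_mul, e1, e2] using this

variable {q : ℕ} [Fact (Nat.Prime q)]

noncomputable def cnv (q : ℕ) [Fact (Nat.Prime q)] (π ρ : ZMod q → ℝ) : ZMod q → ℝ :=
  fun s => ∑ a, π (s + a) * ρ a

lemma sum_shift (π : ZMod q → ℝ) (a : ZMod q) : ∑ s, π (s + a) = ∑ s, π s :=
  Equiv.sum_comp (Equiv.addRight a) π

lemma ent_shift (π : ZMod q → ℝ) (a : ZMod q) : ent (fun s => π (s + a)) = ent π :=
  Equiv.sum_comp (Equiv.addRight a) (fun s => Real.negMulLog (π s))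

lemma cnv_nonneg {π ρ : ZMod q → ℝ} (hπ : ∀ a, 0 ≤ π a) (hρ : ∀ a, 0 ≤ ρ a) (s : ZMod q) :
    0 ≤ cnv q π ρ s :=
  Finset.sum_nonneg fun a _ => mul_nonneg (hπ _) (hρ _)

lemma cnv_prob {π ρ : ZMod q → ℝ} (hπ : IsProb π) (hρ : IsProb ρ) : IsProb (cnv q π ρ) := by
  refine ⟨cnv_nonneg hπ.1 hρ.1, ?_⟩
  unfold cnv
  rw [Finset.sum_comm]
  have : ∀ a : ZMod q, ∑ s, π (s + a) * ρ a = ρ a := by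
    intro a
    rw [← Finset.sum_mul, sum_shift, hπ.2, one_mul]
  rw [Finset.sum_congr rfl (fun a _ => this a), hρ.2]

lemma ent_cnv_left {π ρ : ZMod q → ℝ} (hπ : IsProb π) (hρ : IsProb ρ) :
    ent π ≤ ent (cnv q π ρ) := by
  unfold ent
  have key : ∀ s : ZMod q, ∑ a, ρ a * Real.negMulLog (π (s + a)) ≤ Real.negMulLog (cnv q π ρ s) := by
    intro s
    have := nml_jensen ρ (fun a => π (s + a)) hρ.1 hρ.2 (fun a => hπ.1 _)
    convert this using 2
    · unfold cnv
      congr 1; funext a; ring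
  calc ∑ s, Real.negMulLog (π s) = ∑ s, ∑ a, ρ a * Real.negMulLog (π (s + a)) := by
        rw [Finset.sum_comm]
        have : ∀ a : ZMod q, ∑ s, ρ a * Real.negMulLog (π (s + a)) = ρ a * ∑ s, Real.negMulLog (π s) := by
          intro a
          rw [← Finset.mul_sum]
          congr 1
          exact Equiv.sum_comp (Equiv.addRight a) (fun s => Real.negMulLog (π s))
        rw [Finset.sum_congr rfl fun a _ => this a, ← Finset.sum_mul, hρ.2, one_mul]
    _ ≤ ∑ s, Real.negMulLog (cnv q π ρ s) := Finset.sum_le_sum fun s _ => key s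

lemma cnv_comm_entry (π ρ : ZMod q → ℝ) (s : ZMod q) :
    cnv q π ρ s = ∑ c, π c * ρ (c - s) := by
  unfold cnv
  exact Fintype.sum_equiv (Equiv.addLeft s) (fun a => π (s + a) * ρ a)
    (fun c => π c * ρ (c - s)) (by
    intro a
    simp [Equiv.addLeft, add_sub_cancel_left])

lemma ent_cnv_right {π ρ : ZMod q → ℝ} (hπ : IsProb π) (hρ : IsProb ρ) :
    ent ρ ≤ ent (cnv q π ρ) := by
  unfold ent
  have key : ∀ s : ZMod q, ∑ c, π c * Real.negMulLog (ρ (c - s)) ≤ Real.negMulLog (cnv q π ρ s) := by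
    intro s
    have := nml_jensen π (fun c => ρ (c - s)) hπ.1 hπ.2 (fun c => hρ.1 _)
    rw [cnv_comm_entry]
    exact this
  calc ∑ s, Real.negMulLog (ρ s) = ∑ s, ∑ c, π c * Real.negMulLog (ρ (c - s)) := by
        rw [Finset.sum_comm]
        have : ∀ c : ZMod q, ∑ s, π c * Real.negMulLog (ρ (c - s)) = π c * ∑ s, Real.negMulLog (ρ s) := by
          intro c
          rw [← Finset.mul_sum]
          congr 1
          exact Equiv.sum_comp (Equiv.subLeft c) (fun x => Real.negMulLog (ρ x))
        rw [Finset.sum_congr rfl fun c _ => this c, ← Finset.sum_mul, hπ.2, one_mul]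
    _ ≤ ∑ s, Real.negMulLog (cnv q π ρ s) := Finset.sum_le_sum fun s _ => key s

variable {q : ℕ} [Fact (Nat.Prime q)]

lemma card_zmod : Fintype.card (ZMod q) = q := ZMod.card q

lemma one_lt_q : 1 < (q : ℝ) := by
  exact_mod_cast (Fact.out (p := Nat.Prime q)).one_lt

lemma logq_pos : 0 < Real.log q := Real.log_pos one_lt_q

lemma ent_uniform : ent (fun _ : ZMod q => (q : ℝ)⁻¹) = Real.log q := by
  unfold ent
  rw [Finset.sum_const, Finset.card_univ, card_zmod]
  have : Real.negMulLog (q : ℝ)⁻¹ = (q : ℝ)⁻¹ * Real.log q := by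
    rw [Real.negMulLog, Real.log_inv]; ring
  rw [this, nsmul_eq_mul, ← mul_assoc, mul_inv_cancel₀ (by linarith [one_lt_q (q := q)] : (q:ℝ) ≠ 0), one_mul]

lemma shift_inv_uniform {π : ZMod q → ℝ} (hπ : IsProb π) {d : ZMod q} (hd : d ≠ 0)
    (hinv : ∀ x, π (x + d) = π x) : π = fun _ => (q : ℝ)⁻¹ := by
  have key : ∀ n : ℕ, π ((n : ZMod q) * d) = π 0 := by
    intro n
    induction n with
    | zero => simp
    | succ n ih =>
      have : ((n + 1 : ℕ) : ZMod q) * d = (n : ZMod q) * d + d := by push_cast; ring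
      rw [this, hinv, ih]
  have hall : ∀ x : ZMod q, π x = π 0 := by
    intro x
    have h1 : (((x * d⁻¹).val : ℕ) : ZMod q) = x * d⁻¹ := ZMod.natCast_rightInverse (x * d⁻¹)
    have h2 : ((x * d⁻¹).val : ZMod q) * d = x := by
      rw [h1, mul_assoc, inv_mul_cancel₀ hd, mul_one]
    rw [← h2, key]
  have hsum : ∑ a : ZMod q, π a = (q : ℝ) * π 0 := by
    rw [Finset.sum_congr rfl (fun a _ => hall a), Finset.sum_const, Finset.card_univ, card_zmod,
      nsmul_eq_mul]
  funext x
  rw [hall x]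
  have h1 : (q : ℝ) * π 0 = 1 := by rw [← hsum, hπ.2]
  have hq0 : (q : ℝ) ≠ 0 := by linarith [one_lt_q (q := q)]
  field_simp
  linear_combination h1

lemma exists_two_pos {ρ : ZMod q → ℝ} (hρ : IsProb ρ) (h : 0 < ent ρ) :
    ∃ y₁ y₂ : ZMod q, y₁ ≠ y₂ ∧ 0 < ρ y₁ ∧ 0 < ρ y₂ := by
  by_contra hcon
  push_neg at hcon
  obtain ⟨y₀, hy₀⟩ : ∃ y₀, 0 < ρ y₀ := by
    by_contra hall
    push_neg at hall
    have : ∑ a : ZMod q, ρ a ≤ 0 := Finset.sum_nonpos fun a _ => hall a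
    rw [hρ.2] at this; linarith
  have hzero : ∀ y, y ≠ y₀ → ρ y = 0 := by
    intro y hy
    rcases (hρ.1 y).eq_or_lt with h' | h'
    · exact h'.symm
    · linarith [hcon y y₀ hy h']
  have hone : ρ y₀ = 1 := by
    rw [← hρ.2, Finset.sum_eq_single_of_mem y₀ (Finset.mem_univ _)]
    intro b _ hb
    exact hzero b hb
  have : ent ρ = 0 := by
    unfold ent
    rw [Finset.sum_eq_single_of_mem y₀ (Finset.mem_univ _)]
    · rw [hone]; simp
    · intro b _ hb; rw [hzero b hb]; simp
  linarith

lemma sum_sum_eq_ent {π ρ : ZMod q → ℝ} (hρ1 : ∑ a : ZMod q, ρ a = 1) :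
    ∑ s : ZMod q, ∑ a : ZMod q, ρ a * Real.negMulLog (π (s + a)) = ent π := by
  rw [Finset.sum_comm]
  have : ∀ a : ZMod q, ∑ s : ZMod q, ρ a * Real.negMulLog (π (s + a))
      = ρ a * ∑ s : ZMod q, Real.negMulLog (π s) := by
    intro a
    rw [← Finset.mul_sum]
    congr 1
    exact Equiv.sum_comp (Equiv.addRight a) (fun s => Real.negMulLog (π s))
  rw [Finset.sum_congr rfl fun a _ => this a, ← Finset.sum_mul, hρ1, one_mul]
  rfl

lemma ent_cnv_strict {π ρ : ZMod q → ℝ} (hπ : IsProb π) (hρ : IsProb ρ)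
    (hρe : 0 < ent ρ) (hπu : π ≠ fun _ => (q : ℝ)⁻¹) :
    ent π < ent (cnv q π ρ) := by
  obtain ⟨y₁, y₂, hy, h1, h2⟩ := exists_two_pos hρ hρe
  obtain ⟨s₀, hs₀⟩ : ∃ s₀ : ZMod q, π (s₀ + y₁) ≠ π (s₀ + y₂) := by
    by_contra hcon
    push_neg at hcon
    apply hπu
    apply shift_inv_uniform hπ (d := y₁ - y₂) (sub_ne_zero_of_ne hy)
    intro x
    have := hcon (x - y₂)
    have e1 : x - y₂ + y₁ = x + (y₁ - y₂) := by ring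
    have e2 : x - y₂ + y₂ = x := by ring
    rw [e1, e2] at this
    exact this
  have hle : ∀ s : ZMod q, ∑ a, ρ a * Real.negMulLog (π (s + a))
      ≤ Real.negMulLog (cnv q π ρ s) := by
    intro s
    have := nml_jensen ρ (fun a => π (s + a)) hρ.1 hρ.2 (fun a => hπ.1 _)
    convert this using 2
    unfold cnv
    congr 1; funext a; ring
  have hlt : ∑ a, ρ a * Real.negMulLog (π (s₀ + a)) < Real.negMulLog (cnv q π ρ s₀) := by
    have := nml_jensen_strict ρ (fun a => π (s₀ + a)) hρ.1 hρ.2 (fun a => hπ.1 _)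
      (j := y₁) (k := y₂) h1 h2 hs₀
    convert this using 2
    unfold cnv
    congr 1; funext a; ring
  calc ent π = ∑ s : ZMod q, ∑ a, ρ a * Real.negMulLog (π (s + a)) :=
        (sum_sum_eq_ent hρ.2).symm
    _ < ∑ s : ZMod q, Real.negMulLog (cnv q π ρ s) :=
        Finset.sum_lt_sum (fun s _ => hle s) ⟨s₀, Finset.mem_univ _, hlt⟩
    _ = ent (cnv q π ρ) := rfl

lemma continuous_ent : Continuous (fun p : ZMod q → ℝ => ent p) :=
  continuous_finset_sum _ fun a _ => Real.continuous_negMulLog.comp (continuous_apply a)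

lemma exists_gap_ent (τ : ℝ) (hτ : 0 < τ) :
    ∃ c > 0, ∀ π ρ : ZMod q → ℝ, IsProb π → IsProb ρ →
      ent π ∈ Set.Icc τ (Real.log q - τ) → ent ρ ∈ Set.Icc τ (Real.log q - τ) →
      c ≤ ent (cnv q π ρ) - ent π := by
  classical
  set K : Set ((ZMod q → ℝ) × (ZMod q → ℝ)) :=
    {x | IsProb x.1 ∧ IsProb x.2 ∧ ent x.1 ∈ Set.Icc τ (Real.log q - τ) ∧
      ent x.2 ∈ Set.Icc τ (Real.log q - τ)} with hK
  have hstrict : ∀ x ∈ K, 0 < ent (cnv q x.1 x.2) - ent x.1 := by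
    rintro ⟨p1, p2⟩ ⟨hp1, hp2, hm1, hm2⟩
    have hne : p1 ≠ fun _ => (q : ℝ)⁻¹ := by
      intro h
      have := hm1.2
      rw [h, ent_uniform] at this
      linarith
    have := ent_cnv_strict hp1 hp2 (lt_of_lt_of_le hτ hm2.1) hne
    simpa using sub_pos.mpr this
  rcases Set.eq_empty_or_nonempty K with hKe | hKne
  · refine ⟨1, one_pos, fun π ρ hπ hρ hm1 hm2 => ?_⟩
    exfalso
    have : (π, ρ) ∈ K := ⟨hπ, hρ, hm1, hm2⟩
    rw [hKe] at this
    exact this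
  · have hent1 : Continuous (fun x : (ZMod q → ℝ) × (ZMod q → ℝ) => ent x.1) :=
      continuous_ent.comp continuous_fst
    have hent2 : Continuous (fun x : (ZMod q → ℝ) × (ZMod q → ℝ) => ent x.2) :=
      continuous_ent.comp continuous_snd
    have hcnv : Continuous (fun x : (ZMod q → ℝ) × (ZMod q → ℝ) => ent (cnv q x.1 x.2)) := by
      apply continuous_finset_sum
      intro s _
      apply Real.continuous_negMulLog.comp
      apply continuous_finset_sum
      intro a _
      exact ((continuous_apply (s + a)).comp continuous_fst).mul
        ((continuous_apply a).comp continuous_snd)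
    have hf : Continuous (fun x : (ZMod q → ℝ) × (ZMod q → ℝ) =>
        ent (cnv q x.1 x.2) - ent x.1) := hcnv.sub hent1
    have hprobclosed : IsClosed {p : ZMod q → ℝ | IsProb p} := by
      have : {p : ZMod q → ℝ | IsProb p} =
          (⋂ a : ZMod q, {p : ZMod q → ℝ | 0 ≤ p a}) ∩ {p | ∑ a, p a = 1} := by
        ext p; simp [IsProb, Set.mem_iInter]
      rw [this]
      exact IsClosed.inter
        (isClosed_iInter fun a => isClosed_le continuous_const (continuous_apply a))
        (isClosed_eq (continuous_finset_sum _ fun a _ => continuous_apply a) continuous_const)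
    have hKclosed : IsClosed K := by
      apply IsClosed.inter (hprobclosed.preimage continuous_fst)
      apply IsClosed.inter (hprobclosed.preimage continuous_snd)
      exact IsClosed.inter (isClosed_Icc.preimage hent1) (isClosed_Icc.preimage hent2)
    have hScompact : IsCompact ((Set.univ.pi fun _ : ZMod q => Set.Icc (0:ℝ) 1) ×ˢ
        (Set.univ.pi fun _ : ZMod q => Set.Icc (0:ℝ) 1)) :=
      (isCompact_univ_pi fun _ => isCompact_Icc).prod
        (isCompact_univ_pi fun _ => isCompact_Icc)
    have hKsub : K ⊆ (Set.univ.pi fun _ : ZMod q => Set.Icc (0:ℝ) 1) ×ˢ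
        (Set.univ.pi fun _ : ZMod q => Set.Icc (0:ℝ) 1) := by
      rintro ⟨p1, p2⟩ ⟨hp1, hp2, _, _⟩
      constructor
      · intro a _; exact ⟨hp1.1 a, prob_le_one hp1 a⟩
      · intro a _; exact ⟨hp2.1 a, prob_le_one hp2 a⟩
    have hKcompact : IsCompact K := hScompact.of_isClosed_subset hKclosed hKsub
    obtain ⟨x₀, hx₀K, hmin⟩ := hKcompact.exists_isMinOn hKne hf.continuousOn
    refine ⟨ent (cnv q x₀.1 x₀.2) - ent x₀.1, hstrict x₀ hx₀K, fun π ρ hπ hρ hm1 hm2 => ?_⟩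
    have hmem : (π, ρ) ∈ K := ⟨hπ, hρ, hm1, hm2⟩
    have h2 := hmin hmem
    simpa using h2

lemma exists_gap (τ : ℝ) (hτ : 0 < τ) :
    ∃ c > 0, ∀ π ρ : ZMod q → ℝ, IsProb π → IsProb ρ →
      Hq q π ∈ Set.Icc τ (1 - τ) → Hq q ρ ∈ Set.Icc τ (1 - τ) →
      c ≤ Hq q (cnv q π ρ) - Hq q π := by
  obtain ⟨c, hc, hgap⟩ := exists_gap_ent (q := q) (τ * Real.log q)
    (mul_pos hτ logq_pos)
  refine ⟨c / Real.log q, div_pos hc logq_pos, fun π ρ hπ hρ hm1 hm2 => ?_⟩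
  have L := logq_pos (q := q)
  have t1 : ent π ∈ Set.Icc (τ * Real.log q) (Real.log q - τ * Real.log q) := by
    rw [Hq_eq_ent] at hm1
    constructor
    · calc τ * Real.log q ≤ (ent π / Real.log q) * Real.log q := by
            apply mul_le_mul_of_nonneg_right hm1.1 L.le
        _ = ent π := by field_simp
    · calc ent π = (ent π / Real.log q) * Real.log q := by field_simp
        _ ≤ (1 - τ) * Real.log q := mul_le_mul_of_nonneg_right hm1.2 L.le
        _ = Real.log q - τ * Real.log q := by ring
  have t2 : ent ρ ∈ Set.Icc (τ * Real.log q) (Real.log q - τ * Real.log q) := by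
    rw [Hq_eq_ent] at hm2
    constructor
    · calc τ * Real.log q ≤ (ent ρ / Real.log q) * Real.log q := by
            apply mul_le_mul_of_nonneg_right hm2.1 L.le
        _ = ent ρ := by field_simp
    · calc ent ρ = (ent ρ / Real.log q) * Real.log q := by field_simp
        _ ≤ (1 - τ) * Real.log q := mul_le_mul_of_nonneg_right hm2.2 L.le
        _ = Real.log q - τ * Real.log q := by ring
  have hfin := hgap π ρ hπ hρ t1 t2
  rw [Hq_eq_ent, Hq_eq_ent, ← sub_div]
  exact (div_le_div_iff_of_pos_right L).mpr hfin

variable {C : Chan q}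

noncomputable def Pout (C : Chan q) : C.B → ℝ := fun b => (∑ a, C.Q a b) / q

noncomputable def post (C : Chan q) : C.B → ZMod q → ℝ :=
  fun b a => C.Q a b / (q * Pout C b)

lemma qR_pos : (0 : ℝ) < q := by linarith [one_lt_q (q := q)]

lemma Pout_nonneg (hC : IsChan C) (b : C.B) : 0 ≤ Pout C b :=
  div_nonneg (Finset.sum_nonneg fun a _ => hC.1 a b) qR_pos.le

lemma Pout_sum (hC : IsChan C) : ∑ b, Pout C b = 1 := by
  unfold Pout
  rw [← Finset.sum_div, Finset.sum_comm]
  rw [Finset.sum_congr rfl fun a _ => hC.2 a]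
  rw [Finset.sum_const, Finset.card_univ, card_zmod, nsmul_eq_mul, mul_one,
    div_self (ne_of_gt qR_pos)]

lemma Q_sum_eq (b : C.B) : ∑ a, C.Q a b = q * Pout C b := by
  unfold Pout
  rw [mul_div_assoc', mul_comm, mul_div_assoc, div_self (ne_of_gt (qR_pos (q := q))), mul_one]

lemma Q_eq_zero (hC : IsChan C) {b : C.B} (hb : Pout C b = 0) (a : ZMod q) : C.Q a b = 0 := by
  have h0 : ∑ a, C.Q a b = 0 := by rw [Q_sum_eq, hb, mul_zero]
  exact (Finset.sum_eq_zero_iff_of_nonneg (fun a _ => hC.1 a b)).mp h0 a (Finset.mem_univ a)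

lemma fact_eq (hC : IsChan C) (a : ZMod q) (b : C.B) :
    C.Q a b * (q : ℝ)⁻¹ = Pout C b * post C b a := by
  rcases (Pout_nonneg hC b).eq_or_lt with h | h
  · rw [← h, Q_eq_zero hC h.symm a, zero_mul, zero_mul]
  · unfold post
    have hq : (q:ℝ) ≠ 0 := ne_of_gt qR_pos
    have hp : Pout C b ≠ 0 := ne_of_gt h
    field_simp

lemma post_nonneg (hC : IsChan C) (b : C.B) (a : ZMod q) : 0 ≤ post C b a :=
  div_nonneg (hC.1 a b) (mul_nonneg qR_pos.le (Pout_nonneg hC b))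

lemma post_prob (hC : IsChan C) {b : C.B} (hb : 0 < Pout C b) : IsProb (post C b) := by
  refine ⟨post_nonneg hC b, ?_⟩
  unfold post
  rw [← Finset.sum_div, Q_sum_eq, div_self]
  exact ne_of_gt (mul_pos qR_pos hb)

lemma post_zero (hC : IsChan C) {b : C.B} (hb : Pout C b = 0) : post C b = fun _ => 0 := by
  funext a
  unfold post
  rw [Q_eq_zero hC hb a, zero_div]

lemma ent_zero_fun : ent (fun _ : ZMod q => (0:ℝ)) = 0 := by
  unfold ent; simp

lemma ent_joint_eq (hC : IsChan C) :
    ent (fun ab : ZMod q × C.B => C.Q ab.1 ab.2 * (q : ℝ)⁻¹)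
      = ent (Pout C) + ∑ b, Pout C b * ent (post C b) := by
  unfold ent
  rw [Fintype.sum_prod_type]
  have step1 : ∀ a : ZMod q, ∀ b : C.B,
      Real.negMulLog (C.Q a b * (q:ℝ)⁻¹)
      = post C b a * Real.negMulLog (Pout C b) + Pout C b * Real.negMulLog (post C b a) := by
    intro a b
    rw [fact_eq hC a b, Real.negMulLog_mul]
  rw [Finset.sum_congr rfl fun a _ => Finset.sum_congr rfl fun b _ => step1 a b]
  rw [Finset.sum_comm]
  have step2 : ∀ b : C.B,
      ∑ a : ZMod q, (post C b a * Real.negMulLog (Pout C b)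
        + Pout C b * Real.negMulLog (post C b a))
      = Real.negMulLog (Pout C b) + Pout C b * ent (post C b) := by
    intro b
    rw [Finset.sum_add_distrib, ← Finset.sum_mul, ← Finset.mul_sum]
    congr 1
    rcases (Pout_nonneg hC b).eq_or_lt with h | h
    · rw [← h]; simp
    · rw [(post_prob hC h).2, one_mul]
  rw [Finset.sum_congr rfl fun b _ => step2 b, Finset.sum_add_distrib]
  rfl

lemma Hq_uniform : Hq q (fun _ : ZMod q => (q : ℝ)⁻¹) = 1 := by
  rw [Hq_eq_ent, ent_uniform, div_self (ne_of_gt logq_pos)]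

lemma sq_inv_split (x y : ℝ) : ((q:ℝ)^2)⁻¹ * (x * y) = (x * (q:ℝ)⁻¹) * (y * (q:ℝ)⁻¹) := by
  rw [sq, mul_inv]; ring

lemma stmt_I2_fun (hC : IsChan C) :
    (fun (a₂ : ZMod q) (b₂ : C.B) =>
        ∑ a₁, ∑ b₁, ((q : ℝ) ^ 2)⁻¹ * (C.Q (a₁ + a₂) b₁ * C.Q a₂ b₂))
      = fun a b => C.Q a b * (q : ℝ)⁻¹ := by
  funext a₂ b₂
  have h1 : ∀ a₁ : ZMod q, ∑ b₁, ((q:ℝ)^2)⁻¹ * (C.Q (a₁ + a₂) b₁ * C.Q a₂ b₂)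
      = ((q:ℝ)^2)⁻¹ * C.Q a₂ b₂ := by
    intro a₁
    rw [← Finset.mul_sum, ← Finset.sum_mul, hC.2, one_mul]
  rw [Finset.sum_congr rfl fun a₁ _ => h1 a₁, Finset.sum_const, Finset.card_univ, card_zmod,
    nsmul_eq_mul, sq, mul_inv]
  have hq : (q:ℝ) ≠ 0 := ne_of_gt qR_pos
  field_simp

lemma MIq_I2 (hC : IsChan C) :
    MIq q (fun a (b : C.B) => C.Q a b * (q : ℝ)⁻¹)
      = 1 - ∑ b, Pout C b * Hq q (post C b) := by
  unfold MIq
  have hA : (fun a : ZMod q => ∑ b, C.Q a b * (q:ℝ)⁻¹) = fun _ => (q:ℝ)⁻¹ := by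
    funext a
    rw [← Finset.sum_mul, hC.2, one_mul]
  have hB : (fun b : C.B => ∑ a, C.Q a b * (q:ℝ)⁻¹) = Pout C := by
    funext b
    rw [← Finset.sum_mul, Q_sum_eq, mul_comm (q:ℝ), mul_assoc,
      mul_inv_cancel₀ (ne_of_gt (qR_pos (q := q))), mul_one]
  rw [hA, hB, Hq_uniform]
  have hC3 : Hq q (fun ab : ZMod q × C.B => C.Q ab.1 ab.2 * (q:ℝ)⁻¹)
      = Hq q (Pout C) + ∑ b, Pout C b * Hq q (post C b) := by
    rw [Hq_eq_ent, ent_joint_eq hC, add_div, ← Hq_eq_ent, Finset.sum_div]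
    congr 1
    refine Finset.sum_congr rfl fun b _ => ?_
    rw [Hq_eq_ent, mul_div_assoc]
  rw [hC3]
  ring

lemma margz_eq (hC : IsChan C) (a₁ : ZMod q) (b₁ b₂ : C.B) :
    ∑ a₂, ((q:ℝ)^2)⁻¹ * (C.Q (a₁ + a₂) b₁ * C.Q a₂ b₂)
      = (Pout C b₁ * Pout C b₂) * cnv q (post C b₁) (post C b₂) a₁ := by
  have h1 : ∀ a₂ : ZMod q, ((q:ℝ)^2)⁻¹ * (C.Q (a₁ + a₂) b₁ * C.Q a₂ b₂)
      = (Pout C b₁ * Pout C b₂) * (post C b₁ (a₁ + a₂) * post C b₂ a₂) := by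
    intro a₂
    rw [sq_inv_split, fact_eq hC _ b₁, fact_eq hC _ b₂]
    ring
  rw [Finset.sum_congr rfl fun a₂ _ => h1 a₂, ← Finset.mul_sum]
  rfl

lemma sum_cnv_mul_nml (hC : IsChan C) (b₁ b₂ : C.B) :
    (∑ a₁, cnv q (post C b₁) (post C b₂) a₁) * Real.negMulLog (Pout C b₁ * Pout C b₂)
      = Real.negMulLog (Pout C b₁ * Pout C b₂) := by
  rcases (Pout_nonneg hC b₁).eq_or_lt with h1 | h1
  · rw [← h1, zero_mul, Real.negMulLog_zero, mul_zero]
  rcases (Pout_nonneg hC b₂).eq_or_lt with h2 | h2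
  · rw [← h2, mul_zero, Real.negMulLog_zero, mul_zero]
  rw [(cnv_prob (post_prob hC h1) (post_prob hC h2)).2, one_mul]

lemma ent_margz (hC : IsChan C) :
    ent (fun z : ZMod q × C.B × C.B =>
        (Pout C z.2.1 * Pout C z.2.2) * cnv q (post C z.2.1) (post C z.2.2) z.1)
      = (∑ b₁, ∑ b₂, Pout C b₁ * Pout C b₂ * ent (cnv q (post C b₁) (post C b₂)))
        + 2 * ent (Pout C) := by
  unfold ent
  rw [Fintype.sum_prod_type]
  have hswap : ∀ a₁ : ZMod q, ∑ bb : C.B × C.B,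
      Real.negMulLog ((Pout C bb.1 * Pout C bb.2) * cnv q (post C bb.1) (post C bb.2) a₁)
      = ∑ b₁, ∑ b₂,
        Real.negMulLog ((Pout C b₁ * Pout C b₂) * cnv q (post C b₁) (post C b₂) a₁) := by
    intro a₁
    rw [Fintype.sum_prod_type]
  rw [Finset.sum_congr rfl fun a₁ _ => hswap a₁, Finset.sum_comm]
  have hstep : ∀ b₁ : C.B, ∑ a₁ : ZMod q, ∑ b₂ : C.B,
      Real.negMulLog ((Pout C b₁ * Pout C b₂) * cnv q (post C b₁) (post C b₂) a₁)
      = ∑ b₂ : C.B, (Real.negMulLog (Pout C b₁ * Pout C b₂)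
          + Pout C b₁ * Pout C b₂ * ent (cnv q (post C b₁) (post C b₂))) := by
    intro b₁
    rw [Finset.sum_comm]
    refine Finset.sum_congr rfl fun b₂ _ => ?_
    have expand : ∀ a₁ : ZMod q,
        Real.negMulLog ((Pout C b₁ * Pout C b₂) * cnv q (post C b₁) (post C b₂) a₁)
        = cnv q (post C b₁) (post C b₂) a₁ * Real.negMulLog (Pout C b₁ * Pout C b₂)
          + (Pout C b₁ * Pout C b₂) * Real.negMulLog (cnv q (post C b₁) (post C b₂) a₁) := by
      intro a₁
      rw [Real.negMulLog_mul]
    rw [Finset.sum_congr rfl fun a₁ _ => expand a₁, Finset.sum_add_distrib,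
      ← Finset.sum_mul, ← Finset.mul_sum, sum_cnv_mul_nml hC]
    rfl
  rw [Finset.sum_congr rfl fun b₁ _ => hstep b₁]
  have hsplit : ∀ b₁ : C.B, ∑ b₂ : C.B, (Real.negMulLog (Pout C b₁ * Pout C b₂)
      + Pout C b₁ * Pout C b₂ * ent (cnv q (post C b₁) (post C b₂)))
      = (Real.negMulLog (Pout C b₁) + Pout C b₁ * ent (Pout C))
        + ∑ b₂, Pout C b₁ * Pout C b₂ * ent (cnv q (post C b₁) (post C b₂)) := by
    intro b₁
    rw [Finset.sum_add_distrib]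
    congr 1
    have : ∀ b₂ : C.B, Real.negMulLog (Pout C b₁ * Pout C b₂)
        = Pout C b₂ * Real.negMulLog (Pout C b₁) + Pout C b₁ * Real.negMulLog (Pout C b₂) := by
      intro b₂
      rw [Real.negMulLog_mul]
    rw [Finset.sum_congr rfl fun b₂ _ => this b₂, Finset.sum_add_distrib, ← Finset.sum_mul,
      ← Finset.mul_sum, Pout_sum hC, one_mul]
    rfl
  rw [Finset.sum_congr rfl fun b₁ _ => hsplit b₁, Finset.sum_add_distrib,
    Finset.sum_add_distrib, ← Finset.sum_mul, Pout_sum hC, one_mul]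
  unfold ent
  ring

lemma Hq_joint2 (hC : IsChan C) :
    Hq q (fun ab : ZMod q × C.B => C.Q ab.1 ab.2 * (q:ℝ)⁻¹)
      = Hq q (Pout C) + ∑ b, Pout C b * Hq q (post C b) := by
  rw [Hq_eq_ent, ent_joint_eq hC, add_div, ← Hq_eq_ent, Finset.sum_div]
  congr 1
  refine Finset.sum_congr rfl fun b _ => ?_
  rw [Hq_eq_ent, mul_div_assoc]

lemma ent_joint12 (hC : IsChan C) :
    ent (fun x : ZMod q × (ZMod q × C.B × C.B) =>
        ((q:ℝ)^2)⁻¹ * (C.Q (x.2.1 + x.1) x.2.2.1 * C.Q x.1 x.2.2.2))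
      = 2 * ent (fun ab : ZMod q × C.B => C.Q ab.1 ab.2 * (q:ℝ)⁻¹) := by
  have hq : (q:ℝ) ≠ 0 := ne_of_gt qR_pos
  unfold ent
  rw [Fintype.sum_prod_type]
  have key : ∀ a₂ : ZMod q,
      ∑ z : ZMod q × C.B × C.B,
        Real.negMulLog (((q:ℝ)^2)⁻¹ * (C.Q (z.1 + a₂) z.2.1 * C.Q a₂ z.2.2))
      = (q:ℝ)⁻¹ * (∑ c : ZMod q, ∑ b₁ : C.B, Real.negMulLog (C.Q c b₁ * (q:ℝ)⁻¹))
        + ∑ b₂ : C.B, Real.negMulLog (C.Q a₂ b₂ * (q:ℝ)⁻¹) := by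
    intro a₂
    rw [Fintype.sum_prod_type]
    have inner : ∀ a₁ : ZMod q, ∑ bb : C.B × C.B,
        Real.negMulLog (((q:ℝ)^2)⁻¹ * (C.Q (a₁ + a₂) bb.1 * C.Q a₂ bb.2))
        = (q:ℝ)⁻¹ * (∑ b₁ : C.B, Real.negMulLog (C.Q (a₁ + a₂) b₁ * (q:ℝ)⁻¹))
          + (q:ℝ)⁻¹ * ∑ b₂ : C.B, Real.negMulLog (C.Q a₂ b₂ * (q:ℝ)⁻¹) := by
      intro a₁
      rw [Fintype.sum_prod_type]
      have step1 : ∀ b₁ : C.B,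
          ∑ b₂ : C.B, Real.negMulLog (((q:ℝ)^2)⁻¹ * (C.Q (a₁ + a₂) b₁ * C.Q a₂ b₂))
          = (q:ℝ)⁻¹ * Real.negMulLog (C.Q (a₁ + a₂) b₁ * (q:ℝ)⁻¹)
            + (C.Q (a₁ + a₂) b₁ * (q:ℝ)⁻¹)
              * ∑ b₂ : C.B, Real.negMulLog (C.Q a₂ b₂ * (q:ℝ)⁻¹) := by
        intro b₁
        have expand : ∀ b₂ : C.B,
            Real.negMulLog (((q:ℝ)^2)⁻¹ * (C.Q (a₁ + a₂) b₁ * C.Q a₂ b₂))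
            = (C.Q a₂ b₂ * (q:ℝ)⁻¹) * Real.negMulLog (C.Q (a₁ + a₂) b₁ * (q:ℝ)⁻¹)
              + (C.Q (a₁ + a₂) b₁ * (q:ℝ)⁻¹) * Real.negMulLog (C.Q a₂ b₂ * (q:ℝ)⁻¹) := by
          intro b₂
          rw [sq_inv_split, Real.negMulLog_mul]
        rw [Finset.sum_congr rfl fun b₂ _ => expand b₂, Finset.sum_add_distrib,
          ← Finset.sum_mul, ← Finset.sum_mul, hC.2, one_mul, ← Finset.mul_sum]
      rw [Finset.sum_congr rfl fun b₁ _ => step1 b₁, Finset.sum_add_distrib,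
        ← Finset.mul_sum, ← Finset.sum_mul, ← Finset.sum_mul, hC.2, one_mul]
    rw [Finset.sum_congr rfl fun a₁ _ => inner a₁, Finset.sum_add_distrib, ← Finset.mul_sum,
      Finset.sum_const, Finset.card_univ, card_zmod, nsmul_eq_mul, ← mul_assoc,
      mul_inv_cancel₀ hq, one_mul]
    congr 1
    congr 1
    exact sum_shift (fun c => ∑ b₁ : C.B, Real.negMulLog (C.Q c b₁ * (q:ℝ)⁻¹)) a₂
  rw [Finset.sum_congr rfl fun a₂ _ => key a₂, Finset.sum_add_distrib, Finset.sum_const,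
    Finset.card_univ, card_zmod, nsmul_eq_mul, ← mul_assoc, mul_inv_cancel₀ hq, one_mul,
    Fintype.sum_prod_type]
  ring

lemma MIq_I12 (hC : IsChan C) :
    MIq q (fun (a₂ : ZMod q) (z : ZMod q × C.B × C.B) =>
        ((q : ℝ) ^ 2)⁻¹ * (C.Q (z.1 + a₂) z.2.1 * C.Q a₂ z.2.2))
      = 1 + (∑ b₁, ∑ b₂, Pout C b₁ * Pout C b₂ * Hq q (cnv q (post C b₁) (post C b₂)))
        - 2 * ∑ b, Pout C b * Hq q (post C b) := by
  have hq : (q:ℝ) ≠ 0 := ne_of_gt qR_pos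
  unfold MIq
  have hA : (fun a₂ : ZMod q => ∑ z : ZMod q × C.B × C.B,
      ((q:ℝ)^2)⁻¹ * (C.Q (z.1 + a₂) z.2.1 * C.Q a₂ z.2.2)) = fun _ => (q:ℝ)⁻¹ := by
    funext a₂
    rw [Fintype.sum_prod_type]
    have inner : ∀ a₁ : ZMod q, ∑ bb : C.B × C.B,
        ((q:ℝ)^2)⁻¹ * (C.Q (a₁ + a₂) bb.1 * C.Q a₂ bb.2) = ((q:ℝ)^2)⁻¹ := by
      intro a₁
      rw [Fintype.sum_prod_type]
      have s1 : ∀ b₁ : C.B, ∑ b₂ : C.B, ((q:ℝ)^2)⁻¹ * (C.Q (a₁ + a₂) b₁ * C.Q a₂ b₂)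
          = ((q:ℝ)^2)⁻¹ * C.Q (a₁ + a₂) b₁ := by
        intro b₁
        rw [← Finset.mul_sum, ← Finset.mul_sum, hC.2, mul_one]
      rw [Finset.sum_congr rfl fun b₁ _ => s1 b₁, ← Finset.mul_sum, hC.2, mul_one]
    rw [Finset.sum_congr rfl fun a₁ _ => inner a₁, Finset.sum_const, Finset.card_univ,
      card_zmod, nsmul_eq_mul, sq, mul_inv, ← mul_assoc, mul_inv_cancel₀ hq, one_mul]
  have hB : (fun z : ZMod q × C.B × C.B => ∑ a₂ : ZMod q,
      ((q:ℝ)^2)⁻¹ * (C.Q (z.1 + a₂) z.2.1 * C.Q a₂ z.2.2))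
      = fun z : ZMod q × C.B × C.B =>
        (Pout C z.2.1 * Pout C z.2.2) * cnv q (post C z.2.1) (post C z.2.2) z.1 := by
    funext z
    exact margz_eq hC z.1 z.2.1 z.2.2
  rw [hA, hB, Hq_uniform]
  have hB' : Hq q (fun z : ZMod q × C.B × C.B =>
      (Pout C z.2.1 * Pout C z.2.2) * cnv q (post C z.2.1) (post C z.2.2) z.1)
      = (∑ b₁, ∑ b₂, Pout C b₁ * Pout C b₂ * Hq q (cnv q (post C b₁) (post C b₂)))
        + 2 * Hq q (Pout C) := by
    rw [Hq_eq_ent, ent_margz hC, add_div, Finset.sum_div]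
    congr 1
    · refine Finset.sum_congr rfl fun b₁ _ => ?_
      rw [Finset.sum_div]
      refine Finset.sum_congr rfl fun b₂ _ => ?_
      rw [Hq_eq_ent, mul_div_assoc]
    · rw [Hq_eq_ent]
      ring
  have hC' : Hq q (fun ab : ZMod q × (ZMod q × C.B × C.B) =>
      ((q:ℝ)^2)⁻¹ * (C.Q (ab.2.1 + ab.1) ab.2.2.1 * C.Q ab.1 ab.2.2.2))
      = 2 * (Hq q (Pout C) + ∑ b, Pout C b * Hq q (post C b)) := by
    rw [Hq_eq_ent, ent_joint12 hC, ← Hq_joint2 hC, Hq_eq_ent]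
    ring
  rw [hB']
  rw [show (fun ab : ZMod q × (ZMod q × C.B × C.B) =>
      ((q:ℝ)^2)⁻¹ * (C.Q (ab.2.1 + ab.1) ab.2.2.1 * C.Q ab.1 ab.2.2.2)) =
      (fun ab : ZMod q × (ZMod q × C.B × C.B) =>
      ((q:ℝ)^2)⁻¹ * (C.Q (ab.2.1 + ab.1) ab.2.2.1 * C.Q ab.1 ab.2.2.2)) from rfl] at hC'
  rw [hC']
  ring

lemma Hq_nonneg {p : ZMod q → ℝ} (hp : IsProb p) : 0 ≤ Hq q p := by
  rw [Hq_eq_ent]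
  exact div_nonneg (ent_nonneg hp) logq_pos.le

lemma Hq_le_one {p : ZMod q → ℝ} (hp : IsProb p) : Hq q p ≤ 1 := by
  rw [Hq_eq_ent]
  rw [div_le_one logq_pos]
  have := ent_le_log_card hp
  rwa [card_zmod] at this

lemma Hq_zero_fun : Hq q (fun _ : ZMod q => (0:ℝ)) = 0 := by
  unfold Hq; simp

lemma Hb_zero (hC : IsChan C) {b : C.B} (hb : Pout C b = 0) : Hq q (post C b) = 0 := by
  rw [post_zero hC hb, Hq_zero_fun]

lemma Hb_nonneg (hC : IsChan C) (b : C.B) : 0 ≤ Hq q (post C b) := by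
  rcases (Pout_nonneg hC b).eq_or_lt with h | h
  · rw [Hb_zero hC h.symm]
  · exact Hq_nonneg (post_prob hC h)

lemma Hb_le_one (hC : IsChan C) (b : C.B) : Hq q (post C b) ≤ 1 := by
  rcases (Pout_nonneg hC b).eq_or_lt with h | h
  · rw [Hb_zero hC h.symm]; norm_num
  · exact Hq_le_one (post_prob hC h)

lemma Pout_pos_of_Hb (hC : IsChan C) {b : C.B} (hb : 0 < Hq q (post C b)) : 0 < Pout C b := by
  rcases (Pout_nonneg hC b).eq_or_lt with h | h
  · exfalso; rw [Hb_zero hC h.symm] at hb; exact lt_irrefl _ hb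
  · exact h

lemma Hq_cnv_ge_left {π ρ : ZMod q → ℝ} (hπ : IsProb π) (hρ : IsProb ρ) :
    Hq q π ≤ Hq q (cnv q π ρ) := by
  rw [Hq_eq_ent, Hq_eq_ent]
  apply div_le_div_of_nonneg_right (ent_cnv_left hπ hρ) logq_pos.le

lemma Hq_cnv_ge_right {π ρ : ZMod q → ℝ} (hπ : IsProb π) (hρ : IsProb ρ) :
    Hq q ρ ≤ Hq q (cnv q π ρ) := by
  rw [Hq_eq_ent, Hq_eq_ent]
  apply div_le_div_of_nonneg_right (ent_cnv_right hπ hρ) logq_pos.le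

lemma main_bound (hC : IsChan C) (τ c : ℝ) (hτ : 0 < τ) (hτ2 : τ ≤ 1/12) (hc : 0 < c)
    (hgap : ∀ π ρ : ZMod q → ℝ, IsProb π → IsProb ρ →
      Hq q π ∈ Set.Icc τ (1 - τ) → Hq q ρ ∈ Set.Icc τ (1 - τ) →
      c ≤ Hq q (cnv q π ρ) - Hq q π)
    (hI : (1 : ℝ) - ∑ b, Pout C b * Hq q (post C b) ∈ Set.Ioo (4*τ) (1 - 4*τ)) :
    min (c * τ^2) ((1 - 2*τ) * (2*τ)^2)
      ≤ (∑ b₁, ∑ b₂, Pout C b₁ * Pout C b₂ * Hq q (cnv q (post C b₁) (post C b₂)))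
        - ∑ b, Pout C b * Hq q (post C b) := by
  classical
  set P : C.B → ℝ := Pout C with hP
  set Hb : C.B → ℝ := fun b => Hq q (post C b) with hHb
  set h : ℝ := ∑ b, P b * Hb b with hh
  have hh1 : 4*τ < h := by
    have := hI.2; simp only [Set.mem_Ioo] at hI; linarith [hI.2]
  have hh2 : h < 1 - 4*τ := by
    simp only [Set.mem_Ioo] at hI; linarith [hI.1]
  -- the three regions
  set L : Finset C.B := Finset.univ.filter (fun b => Hb b < τ) with hL
  set M : Finset C.B := Finset.univ.filter (fun b => ¬ Hb b < τ ∧ Hb b ≤ 1 - τ) with hM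
  set U : Finset C.B := Finset.univ.filter (fun b => ¬ Hb b < τ ∧ ¬ Hb b ≤ 1 - τ) with hU
  set l : ℝ := ∑ b ∈ L, P b with hl
  set m : ℝ := ∑ b ∈ M, P b with hm
  set u : ℝ := ∑ b ∈ U, P b with hu
  have hsplit : ∀ f : C.B → ℝ, ∑ b, f b = ∑ b ∈ L, f b + (∑ b ∈ M, f b + ∑ b ∈ U, f b) := by
    intro f
    rw [← Finset.sum_filter_add_sum_filter_not Finset.univ (fun b => Hb b < τ) f]
    congr 1
    rw [← Finset.sum_filter_add_sum_filter_not (Finset.univ.filter (fun b => ¬ Hb b < τ))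
      (fun b => Hb b ≤ 1 - τ) f, Finset.filter_filter, Finset.filter_filter]
  have hPn : ∀ b, 0 ≤ P b := fun b => Pout_nonneg hC b
  have hPsum' : ∑ b, P b = 1 := by rw [hP]; exact Pout_sum hC
  have hln : 0 ≤ l := Finset.sum_nonneg fun b _ => hPn b
  have hmn : 0 ≤ m := Finset.sum_nonneg fun b _ => hPn b
  have hun : 0 ≤ u := Finset.sum_nonneg fun b _ => hPn b
  have hpart : l + m + u = 1 := by
    have := hsplit P
    rw [hPsum'] at this
    linarith [this]
  have hl1 : l ≤ 1 := by linarith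
  have hm1 : m ≤ 1 := by linarith
  have hu1 : u ≤ 1 := by linarith
  have hHn : ∀ b, 0 ≤ Hb b := fun b => Hb_nonneg hC b
  have hH1 : ∀ b, Hb b ≤ 1 := fun b => Hb_le_one hC b
  -- bound (α): h ≤ τ * l + m + u
  have halpha : h ≤ τ * l + m + u := by
    rw [hh, hsplit (fun b => P b * Hb b)]
    have e1 : ∑ b ∈ L, P b * Hb b ≤ τ * l := by
      rw [hl, Finset.mul_sum]
      refine Finset.sum_le_sum fun b hb => ?_
      have : Hb b < τ := (Finset.mem_filter.mp hb).2
      calc P b * Hb b ≤ P b * τ := mul_le_mul_of_nonneg_left this.le (hPn b)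
        _ = τ * P b := by ring
    have e2 : ∑ b ∈ M, P b * Hb b ≤ m := by
      rw [hm]
      refine Finset.sum_le_sum fun b _ => ?_
      calc P b * Hb b ≤ P b * 1 := mul_le_mul_of_nonneg_left (hH1 b) (hPn b)
        _ = P b := mul_one _
    have e3 : ∑ b ∈ U, P b * Hb b ≤ u := by
      rw [hu]
      refine Finset.sum_le_sum fun b _ => ?_
      calc P b * Hb b ≤ P b * 1 := mul_le_mul_of_nonneg_left (hH1 b) (hPn b)
        _ = P b := mul_one _
    linarith
  -- bound (β): 1 - h ≤ l + m + τ
  have hbeta : 1 - h ≤ l + m + τ := by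
    have : 1 - h = ∑ b, P b * (1 - Hb b) := by
      have e : ∀ b : C.B, P b * (1 - Hb b) = P b - P b * Hb b := fun b => by ring
      rw [Finset.sum_congr rfl fun b _ => e b, Finset.sum_sub_distrib, hPsum', hh]
    rw [this, hsplit (fun b => P b * (1 - Hb b))]
    have e1 : ∑ b ∈ L, P b * (1 - Hb b) ≤ l := by
      rw [hl]
      refine Finset.sum_le_sum fun b _ => ?_
      calc P b * (1 - Hb b) ≤ P b * 1 := mul_le_mul_of_nonneg_left (by linarith [hHn b]) (hPn b)
        _ = P b := mul_one _
    have e2 : ∑ b ∈ M, P b * (1 - Hb b) ≤ m := by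
      rw [hm]
      refine Finset.sum_le_sum fun b _ => ?_
      calc P b * (1 - Hb b) ≤ P b * 1 := mul_le_mul_of_nonneg_left (by linarith [hHn b]) (hPn b)
        _ = P b := mul_one _
    have e3 : ∑ b ∈ U, P b * (1 - Hb b) ≤ τ * u := by
      rw [hu, Finset.mul_sum]
      refine Finset.sum_le_sum fun b hb => ?_
      have hbU := (Finset.mem_filter.mp hb).2
      have : 1 - τ < Hb b := by
        by_contra hcon
        exact hbU.2 (by linarith)
      calc P b * (1 - Hb b) ≤ P b * τ := mul_le_mul_of_nonneg_left (by linarith) (hPn b)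
        _ = τ * P b := by ring
    have : τ * u ≤ τ := by nlinarith
    linarith
  -- rewrite the difference as a double sum of nonneg terms
  set D : ℝ := (∑ b₁, ∑ b₂, P b₁ * P b₂ * Hq q (cnv q (post C b₁) (post C b₂))) - h with hD
  have hDeq : D = ∑ b₁, ∑ b₂, P b₁ * P b₂
      * (Hq q (cnv q (post C b₁) (post C b₂)) - Hb b₁) := by
    rw [hD, hh]
    have : ∑ b₁, P b₁ * Hb b₁ = ∑ b₁, ∑ b₂, P b₁ * P b₂ * Hb b₁ := by
      refine Finset.sum_congr rfl fun b₁ _ => ?_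
      have e : ∀ b₂ : C.B, P b₁ * P b₂ * Hb b₁ = (P b₁ * Hb b₁) * P b₂ := fun b₂ => by ring
      rw [Finset.sum_congr rfl fun b₂ _ => e b₂, ← Finset.mul_sum, hPsum', mul_one]
    rw [this, ← Finset.sum_sub_distrib]
    refine Finset.sum_congr rfl fun b₁ _ => ?_
    rw [← Finset.sum_sub_distrib]
    refine Finset.sum_congr rfl fun b₂ _ => by ring
  have hterm_nonneg : ∀ b₁ b₂ : C.B,
      0 ≤ P b₁ * P b₂ * (Hq q (cnv q (post C b₁) (post C b₂)) - Hb b₁) := by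
    intro b₁ b₂
    rcases (hPn b₁).eq_or_lt with h1 | h1
    · rw [← h1]; simp
    rcases (hPn b₂).eq_or_lt with h2 | h2
    · rw [← h2]; simp
    have := Hq_cnv_ge_left (post_prob hC h1) (post_prob hC h2)
    have hnn : 0 ≤ Hq q (cnv q (post C b₁) (post C b₂)) - Hb b₁ := by
      simp only [hHb]; linarith
    positivity
  -- case m ≥ τ
  rcases le_or_gt τ m with hcase | hcase
  · have hMP : ∀ b ∈ M, 0 < P b := by
      intro b hb
      have h1 := not_lt.mp (Finset.mem_filter.mp hb).2.1
      simp only [hHb] at h1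
      exact Pout_pos_of_Hb hC (lt_of_lt_of_le hτ h1)
    have hMmem : ∀ b ∈ M, Hq q (post C b) ∈ Set.Icc τ (1 - τ) := by
      intro b hb
      have h2 := (Finset.mem_filter.mp hb).2
      have h2a := not_lt.mp h2.1
      have h2b := h2.2
      simp only [hHb] at h2a h2b
      exact ⟨h2a, h2b⟩
    have step1 : ∑ b₁ ∈ M, ∑ b₂ ∈ M, P b₁ * P b₂ * c ≤ D := by
      rw [hDeq]
      calc ∑ b₁ ∈ M, ∑ b₂ ∈ M, P b₁ * P b₂ * c
          ≤ ∑ b₁ ∈ M, ∑ b₂ ∈ M, P b₁ * P b₂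
            * (Hq q (cnv q (post C b₁) (post C b₂)) - Hb b₁) := by
            refine Finset.sum_le_sum fun b₁ hb₁ => Finset.sum_le_sum fun b₂ hb₂ => ?_
            have hcle := hgap (post C b₁) (post C b₂) (post_prob hC (hMP b₁ hb₁))
              (post_prob hC (hMP b₂ hb₂)) (hMmem b₁ hb₁) (hMmem b₂ hb₂)
            have hpp : (0:ℝ) ≤ P b₁ * P b₂ := mul_nonneg (hPn b₁) (hPn b₂)
            have hHbeq : Hb b₁ = Hq q (post C b₁) := by simp only [hHb]
            rw [hHbeq]
            exact mul_le_mul_of_nonneg_left hcle hpp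
        _ ≤ ∑ b₁ ∈ M, ∑ b₂,  P b₁ * P b₂
            * (Hq q (cnv q (post C b₁) (post C b₂)) - Hb b₁) := by
            refine Finset.sum_le_sum fun b₁ _ => ?_
            refine Finset.sum_le_sum_of_subset_of_nonneg (Finset.subset_univ M) ?_
            intro b₂ _ _
            exact hterm_nonneg b₁ b₂
        _ ≤ ∑ b₁, ∑ b₂, P b₁ * P b₂
            * (Hq q (cnv q (post C b₁) (post C b₂)) - Hb b₁) := by
            refine Finset.sum_le_sum_of_subset_of_nonneg (Finset.subset_univ M) ?_
            intro b₁ _ _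
            exact Finset.sum_nonneg fun b₂ _ => hterm_nonneg b₁ b₂
    have step2 : c * τ^2 ≤ ∑ b₁ ∈ M, ∑ b₂ ∈ M, P b₁ * P b₂ * c := by
      have heq : ∑ b₁ ∈ M, ∑ b₂ ∈ M, P b₁ * P b₂ * c = c * (m * m) := by
        have e1 : ∀ b₁ : C.B, ∑ b₂ ∈ M, P b₁ * P b₂ * c
            = (P b₁ * c) * ∑ b₂ ∈ M, P b₂ := by
          intro b₁
          rw [Finset.mul_sum]
          exact Finset.sum_congr rfl fun b₂ _ => by ring
        rw [Finset.sum_congr rfl fun b₁ _ => e1 b₁, ← hm]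
        have e2 : ∀ b₁ : C.B, (P b₁ * c) * m = (c * m) * P b₁ := fun b₁ => by ring
        rw [Finset.sum_congr rfl fun b₁ _ => e2 b₁, ← Finset.mul_sum, ← hm]
        ring
      rw [heq]
      have hmm2 : τ^2 ≤ m * m := by
        have := mul_le_mul hcase hcase hτ.le hmn
        calc τ^2 = τ * τ := pow_two τ
          _ ≤ m * m := this
      exact mul_le_mul_of_nonneg_left hmm2 hc.le
    calc min (c * τ^2) ((1 - 2*τ) * (2*τ)^2) ≤ c * τ^2 := min_le_left _ _
      _ ≤ D := le_trans step2 step1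
  -- case m < τ
  · have hτl : τ * l ≤ τ := by nlinarith
    have hlb : 2*τ ≤ l := by linarith
    have hub : 2*τ ≤ u := by linarith [hτl]
    have hUP : ∀ b ∈ U, 0 < P b := by
      intro b hb
      have h2 := (Finset.mem_filter.mp hb).2
      have h3 : 1 - τ < Hb b := not_le.mp h2.2
      simp only [hHb] at h3
      exact Pout_pos_of_Hb hC (by linarith [hτ2])
    have hterm_LU : ∀ b₁ ∈ L, ∀ b₂ ∈ U,
        P b₁ * P b₂ * (1 - 2*τ) ≤ P b₁ * P b₂
          * (Hq q (cnv q (post C b₁) (post C b₂)) - Hb b₁) := by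
      intro b₁ hb₁ b₂ hb₂
      rcases (hPn b₁).eq_or_lt with h1 | h1
      · rw [← h1]; simp
      have h2 := hUP b₂ hb₂
      have hcnv := Hq_cnv_ge_right (post_prob hC h1) (post_prob hC h2)
      have hU2 : 1 - τ < Hb b₂ := not_le.mp (Finset.mem_filter.mp hb₂).2.2
      have hL1 : Hb b₁ < τ := (Finset.mem_filter.mp hb₁).2
      have : 1 - 2*τ ≤ Hq q (cnv q (post C b₁) (post C b₂)) - Hb b₁ := by
        simp only [hHb] at hU2 hL1
        simp only [hHb]
        linarith
      exact mul_le_mul_of_nonneg_left this (mul_nonneg (hPn b₁) (hPn b₂))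
    have step1 : ∑ b₁ ∈ L, ∑ b₂ ∈ U, P b₁ * P b₂ * (1 - 2*τ) ≤ D := by
      rw [hDeq]
      calc ∑ b₁ ∈ L, ∑ b₂ ∈ U, P b₁ * P b₂ * (1 - 2*τ)
          ≤ ∑ b₁ ∈ L, ∑ b₂ ∈ U, P b₁ * P b₂
            * (Hq q (cnv q (post C b₁) (post C b₂)) - Hb b₁) := by
            refine Finset.sum_le_sum fun b₁ hb₁ => Finset.sum_le_sum fun b₂ hb₂ =>
              hterm_LU b₁ hb₁ b₂ hb₂
        _ ≤ ∑ b₁ ∈ L, ∑ b₂, P b₁ * P b₂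
            * (Hq q (cnv q (post C b₁) (post C b₂)) - Hb b₁) := by
            refine Finset.sum_le_sum fun b₁ _ => ?_
            refine Finset.sum_le_sum_of_subset_of_nonneg (Finset.subset_univ U) ?_
            intro b₂ _ _
            exact hterm_nonneg b₁ b₂
        _ ≤ ∑ b₁, ∑ b₂, P b₁ * P b₂
            * (Hq q (cnv q (post C b₁) (post C b₂)) - Hb b₁) := by
            refine Finset.sum_le_sum_of_subset_of_nonneg (Finset.subset_univ L) ?_
            intro b₁ _ _
            exact Finset.sum_nonneg fun b₂ _ => hterm_nonneg b₁ b₂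
    have step2 : (1 - 2*τ) * (2*τ)^2 ≤ ∑ b₁ ∈ L, ∑ b₂ ∈ U, P b₁ * P b₂ * (1 - 2*τ) := by
      have heq : ∑ b₁ ∈ L, ∑ b₂ ∈ U, P b₁ * P b₂ * (1 - 2*τ) = (1 - 2*τ) * (l * u) := by
        have e1 : ∀ b₁ : C.B, ∑ b₂ ∈ U, P b₁ * P b₂ * (1 - 2*τ)
            = (P b₁ * (1 - 2*τ)) * ∑ b₂ ∈ U, P b₂ := by
          intro b₁
          rw [Finset.mul_sum]
          exact Finset.sum_congr rfl fun b₂ _ => by ring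
        rw [Finset.sum_congr rfl fun b₁ _ => e1 b₁, ← hu]
        have e2 : ∀ b₁ : C.B, (P b₁ * (1 - 2*τ)) * u = ((1 - 2*τ) * u) * P b₁ := fun b₁ => by ring
        rw [Finset.sum_congr rfl fun b₁ _ => e2 b₁, ← Finset.mul_sum, ← hl]
        ring
      rw [heq]
      have h2τ : (0:ℝ) ≤ 1 - 2*τ := by linarith
      have hlu : (2*τ)^2 ≤ l * u := by
        have hmm := mul_le_mul hlb hub (by linarith) hln
        calc (2*τ)^2 = (2*τ) * (2*τ) := pow_two (2*τ)
          _ ≤ l * u := hmm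
      exact mul_le_mul_of_nonneg_left hlu h2τ
    calc min (c * τ^2) ((1 - 2*τ) * (2*τ)^2) ≤ (1 - 2*τ) * (2*τ)^2 := min_le_right _ _
      _ ≤ D := le_trans step2 step1


/-- **Lemma 1**: for every `ε > 0` there is `δ > 0`, depending only on `ε` and `q`
(not on the output alphabet), such that for every `q`-ary input channel `Q` and
`A₁, A₂, B₁, B₂` jointly distributed as `q⁻² Q(b₁|a₁+a₂) Q(b₂|a₂)`:
if `I(A₂; B₁B₂A₁) - I(A₂; B₂) < δ` then `I(A₂; B₂) ∉ (ε, 1-ε)`. -/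
theorem basic_polarization_lemma (q : ℕ) [Fact (Nat.Prime q)] (ε : ℝ) (hε : 0 < ε) :
    ∃ δ > 0, ∀ C : Chan q, IsChan C →
      MIq q (fun (a₂ : ZMod q) (z : ZMod q × C.B × C.B) =>
          ((q : ℝ) ^ 2)⁻¹ * (C.Q (z.1 + a₂) z.2.1 * C.Q a₂ z.2.2)) -
        MIq q (fun (a₂ : ZMod q) (b₂ : C.B) =>
          ∑ a₁, ∑ b₁, ((q : ℝ) ^ 2)⁻¹ * (C.Q (a₁ + a₂) b₁ * C.Q a₂ b₂)) < δ →
      MIq q (fun (a₂ : ZMod q) (b₂ : C.B) =>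
          ∑ a₁, ∑ b₁, ((q : ℝ) ^ 2)⁻¹ * (C.Q (a₁ + a₂) b₁ * C.Q a₂ b₂)) ∉
        Set.Ioo ε (1 - ε) := by
  have hε'pos : 0 < min ε (1/3) := lt_min hε (by norm_num)
  have hε'le : min ε (1/3) ≤ 1/3 := min_le_right _ _
  have hε'le2 : min ε (1/3) ≤ ε := min_le_left _ _
  set τ : ℝ := min ε (1/3) / 4 with hτdef
  have hτ : 0 < τ := by positivity
  have hτ2 : τ ≤ 1/12 := by rw [hτdef]; linarith
  obtain ⟨c, hc, hgap⟩ := exists_gap (q := q) τ hτ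
  have hδpos : 0 < min (c * τ^2) ((1 - 2*τ) * (2*τ)^2) := by
    apply lt_min
    · positivity
    · have h1 : 0 < 1 - 2*τ := by linarith
      positivity
  refine ⟨min (c * τ^2) ((1 - 2*τ) * (2*τ)^2), hδpos, fun C hCc hlt hmem => ?_⟩
  rw [stmt_I2_fun hCc] at hlt hmem
  rw [MIq_I12 hCc, MIq_I2 hCc] at hlt
  rw [MIq_I2 hCc] at hmem
  have hI : (1 : ℝ) - ∑ b, Pout C b * Hq q (post C b) ∈ Set.Ioo (4*τ) (1 - 4*τ) := by
    rcases hmem with ⟨hm1, hm2⟩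
    constructor
    · have : 4*τ = min ε (1/3) := by rw [hτdef]; ring
      rw [this]
      linarith
    · have : 4*τ = min ε (1/3) := by rw [hτdef]; ring
      rw [this]
      linarith
  have hmain := main_bound hCc τ c hτ hτ2 hc hgap hI
  linarith

end PolarMAC
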